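/- Zero-one law for bounded Büchi properties on a BSCC: let M = (S,P,s₀,L) be a finite Markov chain, a ∈ AP, B ⊆ S a bottom strongly connected component of M, and let n_{a,B} ∈ ℕ ∪ {∞} be the supremum of the lengths of path fragments that stay entirely inside B and contain no a-state. Then for every state s ∈ B and every n ∈ ℕ: Pr_s{π | π ⊨ □◇_{≤n} a} = 1 if and only if n > n_{a,B}, and Pr_s{π | π ⊨ □◇_{≤n} a} = 0 if and only if n ≤ n_{a,B}. -/

import Mathlib

open MeasureTheory
open scoped ENNReal

namespace BBZO

variable {S : Type}

open Classical in
/-- counter update: reset on an `a`-state, else increment -/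
noncomputable def upd (pa : S → Prop) (c : ℕ) (t : S) : ℕ := if pa t then 0 else c + 1

/-- counter sequence along a run, with initial counter `c` at position 0 -/
noncomputable def cntSeq (pa : S → Prop) (ρ : ℕ → S) (c : ℕ) : ℕ → ℕ
  | 0 => c
  | k+1 => upd pa (cntSeq pa ρ c k) (ρ (k+1))

open Classical in
/-- weighted sum over paths of length `d` keeping the counter `≤ n`, final payoff `f` -/
noncomputable def WS [Fintype S] (P : S → S → ℝ≥0∞) (pa : S → Prop) (n : ℕ) :
    ℕ → S → ℕ → (S → ℕ → ℝ≥0∞) → ℝ≥0∞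
  | 0, t, c, f => if c ≤ n then f t c else 0
  | d+1, t, c, f => if c ≤ n then ∑ t', P t t' * WS P pa n d t' (upd pa c t') f else 0

noncomputable def prodP (P : S → S → ℝ≥0∞) : (d : ℕ) → S → (Fin d → S) → ℝ≥0∞
  | 0, _, _ => 1
  | d+1, t, w => P t (w 0) * prodP P d (w 0) (Fin.tail w)

def cntok (pa : S → Prop) (n : ℕ) : (d : ℕ) → ℕ → (Fin d → S) → Prop
  | 0, c, _ => c ≤ n
  | d+1, c, w => c ≤ n ∧ cntok pa n d (upd pa c (w 0)) (Fin.tail w)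

/-- extension of a finite word to an infinite one -/
def ext (m : ℕ) (v : Fin (m+1) → S) : ℕ → S :=
  fun k => v ⟨min k m, Nat.lt_succ_of_le (Nat.min_le_right k m)⟩

lemma ext_eq (m : ℕ) (v : Fin (m+1) → S) {k : ℕ} (hk : k ≤ m) :
    ext m v k = v ⟨k, Nat.lt_succ_of_le hk⟩ := by
  simp [ext, Nat.min_eq_left hk]

lemma ext_cons_zero (m : ℕ) (t : S) (w : Fin m → S) :
    ext m (Fin.cons t w) 0 = t := by
  rw [ext_eq m _ (Nat.zero_le m)]
  have h : (⟨0, Nat.lt_succ_of_le (Nat.zero_le m)⟩ : Fin (m+1)) = 0 := Fin.ext (by simp)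
  rw [h, Fin.cons_zero]

lemma ext_cons_succ (m : ℕ) (t : S) (w : Fin m → S) (i : Fin m) :
    ext m (Fin.cons t w) ((i : ℕ) + 1) = w i := by
  rw [ext_eq m _ (by omega : (i : ℕ) + 1 ≤ m)]
  have h : (⟨(i : ℕ) + 1, Nat.lt_succ_of_le (by omega)⟩ : Fin (m+1)) = Fin.succ i :=
    Fin.ext rfl
  rw [h, Fin.cons_succ]

lemma cntSeq_shift' (pa : S → Prop) (ρ : ℕ → S) (c : ℕ) (k : ℕ) :
    cntSeq pa ρ c (k+1) = cntSeq pa (fun j => ρ (j+1)) (upd pa c (ρ 1)) k := by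
  induction k with
  | zero => rfl
  | succ k ih => rw [cntSeq, ih]; rfl

lemma cnt_ge (pa : S → Prop) (ρ : ℕ → S) (c : ℕ) (d i : ℕ) (hi : 1 ≤ i)
    (h : ∀ j, i ≤ j → j ≤ i + d → ¬ pa (ρ j)) :
    d + 1 ≤ cntSeq pa ρ c (i + d) := by
  induction d with
  | zero =>
    obtain ⟨i', rfl⟩ := Nat.exists_eq_add_of_le hi
    have e : 1 + i' + 0 = i' + 1 := by omega
    rw [e, cntSeq, upd, if_neg (by apply h <;> omega)]
    omega
  | succ d ih =>
    have e : i + (d+1) = (i + d) + 1 := by omega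
    rw [e, cntSeq, upd, if_neg (h _ (by omega) (by omega))]
    have := ih (fun j hj hj' => h j hj (by omega))
    omega

lemma cnt_window (pa : S → Prop) (g : ℕ → S) (c0 : ℕ) (hc1 : c0 ≤ 1)
    (hc2 : c0 = 1 → ¬ pa (g 0)) :
    ∀ k d, d < cntSeq pa g c0 k → d ≤ k ∧ ¬ pa (g (k - d)) := by
  intro k
  induction k with
  | zero =>
    intro d hd
    simp only [cntSeq] at hd
    have hc0 : c0 = 1 := by omega
    exact ⟨by omega, by simpa [show d = 0 by omega] using hc2 hc0⟩
  | succ k ih =>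
    intro d hd
    rw [cntSeq, upd] at hd
    by_cases h1 : pa (g (k+1))
    · rw [if_pos h1] at hd; omega
    · rw [if_neg h1] at hd
      match d with
      | 0 => exact ⟨by omega, by simpa using h1⟩
      | d+1 =>
        obtain ⟨h2, h3⟩ := ih d (by omega)
        exact ⟨by omega, by simpa [show k + 1 - (d+1) = k - d by omega] using h3⟩

lemma cnt_le_window (pa : S → Prop) (g : ℕ → S) (m n : ℕ) (c0 : ℕ) (hc1 : c0 ≤ 1)
    (hc2 : c0 = 1 → ¬ pa (g 0))
    (hw : ∀ i, i + n ≤ m → ∃ j, i ≤ j ∧ j ≤ i + n ∧ pa (g j)) :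
    ∀ k ≤ m, cntSeq pa g c0 k ≤ n := by
  intro k hk
  by_contra hgt
  push_neg at hgt
  have h1 := cnt_window pa g c0 hc1 hc2 k n hgt
  obtain ⟨j, hj1, hj2, hj3⟩ := hw (k - n) (by omega)
  have h2 := cnt_window pa g c0 hc1 hc2 k (k - j) (by omega)
  rw [show k - (k - j) = j by omega] at h2
  exact h2.2 hj3

lemma WS_eq_zero [Fintype S] (P : S → S → ℝ≥0∞) (pa : S → Prop) (n : ℕ)
    (d : ℕ) (t : S) (c : ℕ) (hc : ¬ c ≤ n) (f : S → ℕ → ℝ≥0∞) :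
    WS P pa n d t c f = 0 := by
  cases d <;> rw [WS, if_neg hc]

lemma WS_le_one [Fintype S] (P : S → S → ℝ≥0∞) (hP : ∀ s, ∑ t, P s t = 1)
    (pa : S → Prop) (n : ℕ) :
    ∀ d t c, WS P pa n d t c (fun _ _ => 1) ≤ 1 := by
  intro d
  induction d with
  | zero => intro t c; rw [WS]; split <;> simp
  | succ d ih =>
    intro t c
    rw [WS]
    split
    · calc ∑ t', P t t' * WS P pa n d t' (upd pa c t') (fun _ _ => 1)
          ≤ ∑ t', P t t' * 1 := Finset.sum_le_sum fun t' _ => mul_le_mul_right (ih t' _) _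
        _ = 1 := by simp [hP t]
    · simp

lemma WS_comp [Fintype S] (P : S → S → ℝ≥0∞) (pa : S → Prop) (n : ℕ) :
    ∀ d m t c f, WS P pa n (d + m) t c f =
      WS P pa n d t c (fun t' c' => WS P pa n m t' c' f) := by
  intro d
  induction d with
  | zero =>
    intro m t c f
    rw [Nat.zero_add, WS]
    by_cases hc : c ≤ n
    · rw [if_pos hc]
    · rw [if_neg hc, WS_eq_zero P pa n m t c hc]
  | succ d ih =>
    intro m t c f
    have e : d + 1 + m = (d + m) + 1 := by omega
    rw [e, WS, WS]
    by_cases hc : c ≤ n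
    · rw [if_pos hc, if_pos hc]
      exact Finset.sum_congr rfl fun t' _ => by rw [ih]
    · rw [if_neg hc, if_neg hc]

lemma WS_mono_B [Fintype S] (P : S → S → ℝ≥0∞) (pa : S → Prop) (n : ℕ)
    (B : Set S) (hBclosed : ∀ s ∈ B, ∀ t, 0 < P s t → t ∈ B) :
    ∀ d t c (f g : S → ℕ → ℝ≥0∞), t ∈ B → (∀ t' ∈ B, ∀ c', f t' c' ≤ g t' c') →
      WS P pa n d t c f ≤ WS P pa n d t c g := by
  intro d
  induction d with
  | zero =>
    intro t c f g ht hfg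
    rw [WS, WS]; split
    · exact hfg t ht c
    · exact le_rfl
  | succ d ih =>
    intro t c f g ht hfg
    rw [WS, WS]; split
    · refine Finset.sum_le_sum fun t' _ => ?_
      by_cases hp : 0 < P t t'
      · exact mul_le_mul_right (ih t' _ f g (hBclosed t ht t' hp) hfg) _
      · have h0 : P t t' = 0 := by simpa [pos_iff_ne_zero] using hp
        simp [h0]
    · exact le_rfl

lemma WS_const [Fintype S] (P : S → S → ℝ≥0∞) (pa : S → Prop) (n : ℕ) (r : ℝ≥0∞) :
    ∀ d t c, WS P pa n d t c (fun _ _ => r) = r * WS P pa n d t c (fun _ _ => 1) := by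
  intro d
  induction d with
  | zero => intro t c; rw [WS, WS]; split <;> simp
  | succ d ih =>
    intro t c
    rw [WS, WS]
    split
    · rw [Finset.mul_sum]
      exact Finset.sum_congr rfl fun t' _ => by rw [ih]; ring
    · simp

lemma sum_cons_split {M : Type*} [AddCommMonoid M] (m : ℕ) (F : (Fin (m+1) → S) → M)
    [Fintype S] :
    ∑ v : Fin (m+1) → S, F v = ∑ t : S, ∑ w : Fin m → S, F (Fin.cons t w) := by
  rw [← (Fin.consEquiv (fun _ : Fin (m+1) => S)).sum_comp F, Fintype.sum_prod_type]
  rfl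

lemma prod_eq_prodP [Fintype S] (P : S → S → ℝ≥0∞) :
    ∀ (m : ℕ) (g : ℕ → S),
      ∏ k ∈ Finset.range m, P (g k) (g (k+1)) = prodP P m (g 0) (fun i : Fin m => g (i+1)) := by
  intro m
  induction m with
  | zero => intro g; simp [prodP]
  | succ m ih =>
    intro g
    rw [Finset.prod_range_succ']
    have h := ih (fun j => g (j+1))
    rw [h, prodP, mul_comm]
    rfl

lemma cntok_of_cnt (pa : S → Prop) (n : ℕ) :
    ∀ (d : ℕ) (g : ℕ → S) (c : ℕ), (∀ k ≤ d, cntSeq pa g c k ≤ n) →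
      cntok pa n d c (fun i : Fin d => g (i+1)) := by
  intro d
  induction d with
  | zero => intro g c h; exact h 0 (by omega)
  | succ d ih =>
    intro g c h
    constructor
    · exact h 0 (by omega)
    · have hw0 : (fun i : Fin (d+1) => g (i+1)) 0 = g 1 := rfl
      rw [hw0]
      have htail : Fin.tail (fun i : Fin (d+1) => g (i+1)) = fun i : Fin d => g (i+1+1) := by
        funext i; simp [Fin.tail]
      rw [htail]
      have h2 := ih (fun j => g (j+1)) (upd pa c (g 1)) (fun k hk => by
        rw [← cntSeq_shift' pa g c k]
        exact h (k+1) (by omega))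
      simpa using h2

open Classical in
lemma sum_le_WS [Fintype S] (P : S → S → ℝ≥0∞) (pa : S → Prop) (n : ℕ) :
    ∀ (d : ℕ) (t : S) (c : ℕ),
      ∑ w : Fin d → S, (if cntok pa n d c w then prodP P d t w else 0) ≤
        WS P pa n d t c (fun _ _ => 1) := by
  intro d
  induction d with
  | zero =>
    intro t c
    rw [Fintype.sum_unique, WS]
    simp only [cntok, prodP]
    by_cases h : c ≤ n <;> simp [h]
  | succ d ih =>
    intro t c
    rw [sum_cons_split, WS]
    by_cases hc : c ≤ n
    · rw [if_pos hc]
      refine Finset.sum_le_sum fun t₁ _ => ?_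
      have hterm : ∀ w : Fin d → S,
          (if cntok pa n (d+1) c (Fin.cons t₁ w) then prodP P (d+1) t (Fin.cons t₁ w) else 0) =
          P t t₁ * (if cntok pa n d (upd pa c t₁) w then prodP P d t₁ w else 0) := by
        intro w
        have h1 : cntok pa n (d+1) c (Fin.cons t₁ w) ↔ (c ≤ n ∧ cntok pa n d (upd pa c t₁) w) := by
          simp [cntok]
        have h2 : prodP P (d+1) t (Fin.cons t₁ w) = P t t₁ * prodP P d t₁ w := by
          simp [prodP]
        rw [h1, h2]
        by_cases h : cntok pa n d (upd pa c t₁) w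
        · rw [if_pos ⟨hc, h⟩, if_pos h]
        · rw [if_neg (fun hh => h hh.2), if_neg h, mul_zero]
      calc ∑ w : Fin d → S, (if cntok pa n (d+1) c (Fin.cons t₁ w) then prodP P (d+1) t (Fin.cons t₁ w) else 0)
          = P t t₁ * ∑ w : Fin d → S, (if cntok pa n d (upd pa c t₁) w then prodP P d t₁ w else 0) := by
            rw [Finset.mul_sum]; exact Finset.sum_congr rfl fun w _ => hterm w
        _ ≤ P t t₁ * WS P pa n d t₁ (upd pa c t₁) (fun _ _ => 1) := mul_le_mul_right (ih t₁ _) _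
    · rw [if_neg hc]
      have hno : ∀ v : Fin (d+1) → S, ¬ cntok pa n (d+1) c v := fun v h => hc h.1
      refine le_of_eq (Finset.sum_eq_zero fun t₁ _ => Finset.sum_eq_zero fun w _ => if_neg (hno _))

lemma P_le_one [Fintype S] (P : S → S → ℝ≥0∞) (hP : ∀ s, ∑ t, P s t = 1) (t t' : S) :
    P t t' ≤ 1 := by
  rw [← hP t]
  exact Finset.single_le_sum (fun i _ => zero_le) (Finset.mem_univ t')

lemma CL [Fintype S] [DecidableEq S] (P : S → S → ℝ≥0∞) (hP : ∀ s, ∑ t, P s t = 1)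
    (pa : S → Prop) (n : ℕ) :
    ∀ (l : ℕ) (d : ℕ) (ρ : ℕ → S) (c : ℕ), l ≤ d →
      (∃ k, k ≤ l ∧ n < cntSeq pa ρ c k) →
      WS P pa n d (ρ 0) c (fun _ _ => 1) + ∏ i ∈ Finset.range l, P (ρ i) (ρ (i+1)) ≤ 1 := by
  intro l
  induction l with
  | zero =>
    intro d ρ c _ hov
    obtain ⟨k, hk, hov⟩ := hov
    have hk0 : k = 0 := by omega
    subst hk0
    have hc : ¬ c ≤ n := by simpa [cntSeq] using Nat.not_le.mpr hov
    rw [WS_eq_zero P pa n d _ c hc]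
    simp
  | succ l ih =>
    intro d ρ c hld hov
    obtain ⟨d', rfl⟩ : ∃ d', d = d' + 1 := ⟨d - 1, by omega⟩
    by_cases hc : c ≤ n
    · obtain ⟨k, hk, hov⟩ := hov
      obtain ⟨k', rfl⟩ : ∃ k', k = k' + 1 := by
        refine ⟨k - 1, ?_⟩
        rcases Nat.eq_zero_or_pos k with h | h
        · subst h; simp [cntSeq] at hov; omega
        · omega
      have key := ih d' (fun j => ρ (j+1)) (upd pa c (ρ 1)) (by omega)
        ⟨k', by omega, by rw [← cntSeq_shift']; exact hov⟩
      simp only [Nat.zero_add] at key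
      rw [WS, if_pos hc, Finset.prod_range_succ']
      simp only [Nat.zero_add]
      rw [← Finset.add_sum_erase _ _ (Finset.mem_univ (ρ 1))]
      have hA : P (ρ 0) (ρ 1) * WS P pa n d' (ρ 1) (upd pa c (ρ 1)) (fun _ _ => 1) +
          (∏ i ∈ Finset.range l, P (ρ (i+1)) (ρ (i+1+1))) * P (ρ 0) (ρ 1) ≤ P (ρ 0) (ρ 1) := by
        calc P (ρ 0) (ρ 1) * WS P pa n d' (ρ 1) (upd pa c (ρ 1)) (fun _ _ => 1) +
            (∏ i ∈ Finset.range l, P (ρ (i+1)) (ρ (i+1+1))) * P (ρ 0) (ρ 1)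
            = P (ρ 0) (ρ 1) * (WS P pa n d' (ρ 1) (upd pa c (ρ 1)) (fun _ _ => 1) +
              ∏ i ∈ Finset.range l, P (ρ (i+1)) (ρ (i+1+1))) := by ring
          _ ≤ P (ρ 0) (ρ 1) * 1 := mul_le_mul_right key _
          _ = P (ρ 0) (ρ 1) := mul_one _
      have hB : ∑ t' ∈ Finset.univ.erase (ρ 1), P (ρ 0) t' * WS P pa n d' t' (upd pa c t') (fun _ _ => 1) ≤
          ∑ t' ∈ Finset.univ.erase (ρ 1), P (ρ 0) t' := by
        refine Finset.sum_le_sum fun t' _ => ?_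
        calc P (ρ 0) t' * WS P pa n d' t' (upd pa c t') (fun _ _ => 1)
            ≤ P (ρ 0) t' * 1 := mul_le_mul_right (WS_le_one P hP pa n d' t' _) _
          _ = P (ρ 0) t' := mul_one _
      calc P (ρ 0) (ρ 1) * WS P pa n d' (ρ 1) (upd pa c (ρ 1)) (fun _ _ => 1) +
            (∑ t' ∈ Finset.univ.erase (ρ 1), P (ρ 0) t' * WS P pa n d' t' (upd pa c t') (fun _ _ => 1)) +
            (∏ i ∈ Finset.range l, P (ρ (i+1)) (ρ (i+1+1))) * P (ρ 0) (ρ 1)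
          = (P (ρ 0) (ρ 1) * WS P pa n d' (ρ 1) (upd pa c (ρ 1)) (fun _ _ => 1) +
            (∏ i ∈ Finset.range l, P (ρ (i+1)) (ρ (i+1+1))) * P (ρ 0) (ρ 1)) +
            ∑ t' ∈ Finset.univ.erase (ρ 1), P (ρ 0) t' * WS P pa n d' t' (upd pa c t') (fun _ _ => 1) := by
            ring
        _ ≤ P (ρ 0) (ρ 1) + ∑ t' ∈ Finset.univ.erase (ρ 1), P (ρ 0) t' := add_le_add hA hB
        _ = ∑ t', P (ρ 0) t' := Finset.add_sum_erase _ _ (Finset.mem_univ (ρ 1))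
        _ = 1 := hP (ρ 0)
    · rw [WS_eq_zero P pa n _ _ c hc, zero_add]
      exact Finset.prod_le_one (fun _ _ => zero_le) (fun i _ => P_le_one P hP _ _)

open Classical in
lemma cover_le [Fintype S] [MeasurableSpace S] (μ : Measure (ℕ → S)) (m : ℕ)
    (Q : (ℕ → S) → Prop) (hQ : ∀ π π' : ℕ → S, (∀ k ≤ m, π k = π' k) → Q π → Q π')
    (wv : (ℕ → S) → ℝ≥0∞) (hw : ∀ u : ℕ → S, μ {π | ∀ k ≤ m, π k = u k} = wv u) :
    μ {π | Q π} ≤ ∑ v : Fin (m+1) → S, if Q (ext m v) then wv (ext m v) else 0 := by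
  have hsub : {π | Q π} ⊆ ⋃ v ∈ Finset.univ.filter (fun v : Fin (m+1) → S => Q (ext m v)),
      {π | ∀ k ≤ m, π k = ext m v k} := by
    intro π hπ
    have hagree : ∀ k ≤ m, π k = ext m (fun i : Fin (m+1) => π i) k := by
      intro k hk
      rw [ext_eq m _ hk]
    exact Set.mem_iUnion₂.mpr ⟨_, Finset.mem_filter.mpr ⟨Finset.mem_univ _, hQ π _ hagree hπ⟩, hagree⟩
  calc μ {π | Q π}
      ≤ μ (⋃ v ∈ Finset.univ.filter (fun v : Fin (m+1) → S => Q (ext m v)),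
        {π | ∀ k ≤ m, π k = ext m v k}) := measure_mono hsub
    _ ≤ ∑ v ∈ Finset.univ.filter (fun v : Fin (m+1) → S => Q (ext m v)),
        μ {π | ∀ k ≤ m, π k = ext m v k} := measure_biUnion_finset_le _ _
    _ = ∑ v ∈ Finset.univ.filter (fun v : Fin (m+1) → S => Q (ext m v)), wv (ext m v) :=
        Finset.sum_congr rfl fun v _ => hw _
    _ = ∑ v : Fin (m+1) → S, if Q (ext m v) then wv (ext m v) else 0 := by
        rw [Finset.sum_filter]

end BBZO

/-- Zero-one law for bounded Büchi properties on a BSCC: for a finite Markov chain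
`M = (S,P,s₀,L)`, a bottom strongly connected component `B`, `n_{a,B}` the supremum of the
lengths of path fragments staying inside `B` containing no `a`-state, any state `s ∈ B` and
any `n ∈ ℕ`: `Pr_s(□◇_{≤n} a) = 1` iff `n > n_{a,B}`, and `Pr_s(□◇_{≤n} a) = 0` iff
`n ≤ n_{a,B}`. -/
theorem bounded_buchi_zero_one_law
    {AP S : Type} [Fintype S] [DecidableEq S] [MeasurableSpace S]
    (P : S → S → ℝ≥0∞) (hP : ∀ s, ∑ t, P s t = 1)
    (s₀ : S) (L : S → Set AP) (a : AP)
    (B : Set S)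
    -- B is a BSCC: a nonempty set of mutually reachable states with no edge leaving B
    (hBne : B.Nonempty)
    (hBconn : ∀ s ∈ B, ∀ t ∈ B, ∃ (k : ℕ) (u : ℕ → S),
      u 0 = s ∧ u k = t ∧ ∀ i < k, 0 < P (u i) (u (i + 1)))
    (hBclosed : ∀ s ∈ B, ∀ t, 0 < P s t → t ∈ B)
    -- n_{a,B}: supremum of the lengths of a-avoiding path fragments inside B
    (nab : WithBot ℕ∞)
    (hnab : nab = sSup ((fun m : ℕ => ((m : ℕ∞) : WithBot ℕ∞)) ''
      {m : ℕ | ∃ u : ℕ → S,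
        (∀ i ≤ m, u i ∈ B ∧ a ∉ L (u i)) ∧ ∀ i < m, 0 < P (u i) (u (i + 1))}))
    (s : S) (hs : s ∈ B)
    -- Pr_s: the probability measure on paths starting in s
    (μ : Measure (ℕ → S)) (hprob : IsProbabilityMeasure μ)
    (hcyl : ∀ (n : ℕ) (u : ℕ → S),
      μ {π | ∀ k ≤ n, π k = u k} =
        (if u 0 = s then 1 else 0) * ∏ k ∈ Finset.range n, P (u k) (u (k + 1)))
    (n : ℕ) :
    (μ {π | ∀ i : ℕ, ∃ j, i ≤ j ∧ j ≤ i + n ∧ a ∈ L (π j)} = 1 ↔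
      nab < ((n : ℕ∞) : WithBot ℕ∞)) ∧
    (μ {π | ∀ i : ℕ, ∃ j, i ≤ j ∧ j ≤ i + n ∧ a ∈ L (π j)} = 0 ↔
      ((n : ℕ∞) : WithBot ℕ∞) ≤ nab) := by
  classical
  set pa : S → Prop := fun t => a ∈ L t with hpa
  set E : Set (ℕ → S) := {π | ∀ i : ℕ, ∃ j, i ≤ j ∧ j ≤ i + n ∧ a ∈ L (π j)} with hE
  -- ===== Part B : nab < n → μ E = 1 =====
  have hone : nab < ((n : ℕ∞) : WithBot ℕ∞) → μ E = 1 := by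
    intro hlt
    have hVi : ∀ i : ℕ, μ {π : ℕ → S | ∀ j, i ≤ j → j ≤ i + n → a ∉ L (π j)} = 0 := by
      intro i
      refine le_antisymm ?_ (zero_le)
      have hcov := BBZO.cover_le μ (i+n)
        (fun π => ∀ j, i ≤ j → j ≤ i + n → a ∉ L (π j))
        (fun π π' hag hQ j hj hj' => by rw [← hag j (by omega)]; exact hQ j hj hj')
        (fun u => (if u 0 = s then 1 else 0) * ∏ k ∈ Finset.range (i+n), P (u k) (u (k+1)))
        (fun u => hcyl (i+n) u)
      refine le_trans hcov (le_of_eq (Finset.sum_eq_zero fun v _ => ?_))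
      by_cases hQ : ∀ j, i ≤ j → j ≤ i + n → a ∉ L (BBZO.ext (i+n) v j)
      swap
      · rw [if_neg hQ]
      rw [if_pos hQ]
      set g : ℕ → S := BBZO.ext (i+n) v with hg
      show (if g 0 = s then (1:ℝ≥0∞) else 0) * ∏ k ∈ Finset.range (i+n), P (g k) (g (k+1)) = 0
      by_cases h0 : g 0 = s
      swap
      · rw [if_neg h0, zero_mul]
      rw [if_pos h0, one_mul]
      by_contra hne
      have hpos : ∀ k, k < i + n → 0 < P (g k) (g (k+1)) := by
        intro k hk
        exact pos_iff_ne_zero.mpr (Finset.prod_ne_zero_iff.mp hne k (Finset.mem_range.mpr hk))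
      have hgB : ∀ k, k ≤ i + n → g k ∈ B := by
        intro k
        induction k with
        | zero => intro _; rw [h0]; exact hs
        | succ k ihk => intro hk; exact hBclosed (g k) (ihk (by omega)) _ (hpos k (by omega))
      have hmem : ((n : ℕ∞) : WithBot ℕ∞) ∈ ((fun m : ℕ => ((m : ℕ∞) : WithBot ℕ∞)) ''
          {m : ℕ | ∃ u : ℕ → S,
            (∀ i ≤ m, u i ∈ B ∧ a ∉ L (u i)) ∧ ∀ i < m, 0 < P (u i) (u (i + 1))}) := by
        refine ⟨n, ⟨fun k => g (i + min k n), fun k hk => ?_, fun k hk => ?_⟩, rfl⟩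
        · simp only [min_eq_left hk]
          exact ⟨hgB _ (by omega), hQ _ (by omega) (by omega)⟩
        · simp only [min_eq_left (le_of_lt hk), min_eq_left (show k + 1 ≤ n by omega)]
          rw [show i + (k + 1) = (i + k) + 1 by omega]
          exact hpos (i + k) (by omega)
      have hle : ((n : ℕ∞) : WithBot ℕ∞) ≤ nab := by rw [hnab]; exact le_sSup hmem
      exact absurd hlt (not_lt.mpr hle)
    have hEc : Eᶜ ⊆ ⋃ i : ℕ, {π : ℕ → S | ∀ j, i ≤ j → j ≤ i + n → a ∉ L (π j)} := by
      intro π hπ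
      simp only [hE, Set.mem_compl_iff, Set.mem_setOf_eq] at hπ
      push_neg at hπ
      obtain ⟨i, hi⟩ := hπ
      exact Set.mem_iUnion.mpr ⟨i, hi⟩
    have hc0 : μ Eᶜ = 0 := by
      refine le_antisymm ?_ (zero_le)
      calc μ Eᶜ ≤ μ (⋃ i : ℕ, {π : ℕ → S | ∀ j, i ≤ j → j ≤ i + n → a ∉ L (π j)}) :=
            measure_mono hEc
        _ ≤ ∑' i : ℕ, μ {π : ℕ → S | ∀ j, i ≤ j → j ≤ i + n → a ∉ L (π j)} :=
            measure_iUnion_le _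
        _ = 0 := by simp [hVi]
    have h1 : (1:ℝ≥0∞) ≤ μ E := by
      calc (1:ℝ≥0∞) = μ Set.univ := measure_univ.symm
        _ = μ (E ∪ Eᶜ) := by rw [Set.union_compl_self]
        _ ≤ μ E + μ Eᶜ := measure_union_le _ _
        _ = μ E := by rw [hc0, add_zero]
    exact le_antisymm (le_trans (measure_mono (Set.subset_univ _)) (le_of_eq measure_univ)) h1
  -- ===== Part A : n ≤ nab → μ E = 0 =====
  have hzero : ((n : ℕ∞) : WithBot ℕ∞) ≤ nab → μ E = 0 := by
    intro hge
    -- extract an a-avoiding fragment of length n inside B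
    have hnT : ∃ u : ℕ → S, (∀ i ≤ n, u i ∈ B ∧ a ∉ L (u i)) ∧ ∀ i < n, 0 < P (u i) (u (i+1)) := by
      by_contra hnT
      have hTdc : ∀ m : ℕ, (∃ u : ℕ → S,
          (∀ i ≤ m, u i ∈ B ∧ a ∉ L (u i)) ∧ ∀ i < m, 0 < P (u i) (u (i + 1))) → n ≤ m → False := by
        intro m hm hnm
        obtain ⟨u, h1, h2⟩ := hm
        exact hnT ⟨u, fun i hi => h1 i (le_trans hi hnm), fun i hi => h2 i (lt_of_lt_of_le hi hnm)⟩
      rcases Nat.eq_zero_or_pos n with h0 | h0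
      · have hTe : {m : ℕ | ∃ u : ℕ → S,
            (∀ i ≤ m, u i ∈ B ∧ a ∉ L (u i)) ∧ ∀ i < m, 0 < P (u i) (u (i + 1))} = ∅ :=
          Set.eq_empty_iff_forall_notMem.mpr (fun m hm => hTdc m hm (by omega))
        rw [hnab, hTe, Set.image_empty, sSup_empty] at hge
        exact WithBot.coe_ne_bot (le_bot_iff.mp hge)
      · have hub : nab ≤ (((n-1 : ℕ) : ℕ∞) : WithBot ℕ∞) := by
          rw [hnab]
          refine sSup_le ?_
          rintro x ⟨m, hm, rfl⟩
          have hmn : m ≤ n - 1 := by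
            by_contra hgt
            exact hTdc m hm (by omega)
          exact WithBot.coe_le_coe.mpr (by exact_mod_cast hmn)
        have hcon : ((n : ℕ∞) : WithBot ℕ∞) ≤ (((n-1:ℕ) : ℕ∞) : WithBot ℕ∞) :=
          le_trans hge hub
        have hcon2 : (n : ℕ) ≤ n - 1 := by
          have := WithBot.coe_le_coe.mp hcon
          exact_mod_cast this
        omega
    obtain ⟨u, hu, hup⟩ := hnT
    have hu0B : u 0 ∈ B := (hu 0 (Nat.zero_le n)).1
    have hreach : ∀ x : S, ∃ (k : ℕ) (q : ℕ → S), x ∈ B →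
        q 0 = x ∧ q k = u 0 ∧ ∀ i' < k, 0 < P (q i') (q (i'+1)) := by
      intro x
      by_cases hx : x ∈ B
      · obtain ⟨k, q, hq⟩ := hBconn x hx (u 0) hu0B
        exact ⟨k, q, fun _ => hq⟩
      · exact ⟨0, fun _ => x, fun h => absurd h hx⟩
    choose kf qf hqf using hreach
    set R := (Finset.univ : Finset S).sup kf with hR
    set D := R + n + 2 with hD
    have hblock : ∀ t : S, ∃ δ : ℝ≥0∞, 0 < δ ∧ δ ≤ 1 ∧
        (t ∈ B → ∀ c, BBZO.WS P pa n D t c (fun _ _ => 1) + δ ≤ 1) := by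
      intro t
      by_cases ht : t ∈ B
      swap
      · exact ⟨1, zero_lt_one, le_rfl, fun h => absurd h ht⟩
      have ht1 : ∃ t₁, P t t₁ ≠ 0 := by
        by_contra hno
        push_neg at hno
        have h1 := hP t
        rw [Finset.sum_eq_zero (fun x _ => hno x)] at h1
        exact zero_ne_one h1
      obtain ⟨t₁, ht₁⟩ := ht1
      have ht₁B : t₁ ∈ B := hBclosed t ht t₁ (pos_iff_ne_zero.mpr ht₁)
      set kt := kf t₁ with hkt
      set q := qf t₁ with hq
      obtain ⟨hq0x, hqkx, hqposx⟩ := hqf t₁ ht₁B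
      have hq0 : q 0 = t₁ := hq0x
      have hqk : q kt = u 0 := hqkx
      have hqpos : ∀ i' < kt, 0 < P (q i') (q (i'+1)) := hqposx
      set ρ : ℕ → S := fun j => if j = 0 then t else
        (if j - 1 < kt then q (j-1) else u (min (j - 1 - kt) n)) with hρ
      have hρ0 : ρ 0 = t := by simp [hρ]
      have hρq : ∀ j, j ≤ kt → ρ (j+1) = q j := by
        intro j hj
        rcases Nat.lt_or_ge j kt with h | h
        · simp only [hρ]
          rw [if_neg (by omega), if_pos (by omega : j + 1 - 1 < kt)]
          rfl
        · have hjk : j = kt := by omega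
          simp only [hρ]
          rw [if_neg (by omega), if_neg (by omega), show j + 1 - 1 - kt = 0 by omega,
            min_eq_left (Nat.zero_le n), hjk]
          exact hqk.symm
      have hρu : ∀ j, j ≤ n → ρ (1 + kt + j) = u j := by
        intro j hj
        simp only [hρ]
        rw [if_neg (by omega), if_neg (by omega), show 1 + kt + j - 1 - kt = j by omega,
          min_eq_left hj]
      set l := 1 + kt + n with hl
      have hld : l ≤ D := by
        have hkR : kt ≤ R := Finset.le_sup (Finset.mem_univ t₁)
        omega
      have hposρ : ∀ i' , i' < l → 0 < P (ρ i') (ρ (i'+1)) := by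
        intro i' hi'
        rcases Nat.lt_or_ge i' (kt + 1) with h1 | h1
        · rcases Nat.eq_zero_or_pos i' with h0 | h0
          · subst h0
            rw [hρ0, show (0:ℕ) + 1 = 0 + 1 by rfl, hρq 0 (Nat.zero_le _), hq0]
            exact pos_iff_ne_zero.mpr ht₁
          · obtain ⟨j, rfl⟩ : ∃ j, i' = j + 1 := ⟨i' - 1, by omega⟩
            rw [hρq j (by omega), hρq (j+1) (by omega)]
            exact hqpos j (by omega)
        · obtain ⟨j, rfl⟩ : ∃ j, i' = 1 + kt + j := ⟨i' - (1 + kt), by omega⟩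
          have hjn : j < n := by omega
          rw [hρu j (by omega), show 1 + kt + j + 1 = 1 + kt + (j+1) by omega,
            hρu (j+1) (by omega)]
          exact hup j hjn
      have hwin : ∀ j, 1 + kt ≤ j → j ≤ 1 + kt + n → ¬ pa (ρ j) := by
        intro j hj1 hj2
        obtain ⟨j', rfl⟩ : ∃ j', j = 1 + kt + j' := ⟨j - (1 + kt), by omega⟩
        rw [hρu j' (by omega)]
        exact (hu j' (by omega)).2
      refine ⟨∏ i' ∈ Finset.range l, P (ρ i') (ρ (i'+1)), ?_, ?_, ?_⟩
      · rw [CanonicallyOrderedAdd.prod_pos]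
        exact fun i' hi' => hposρ i' (Finset.mem_range.mp hi')
      · exact Finset.prod_le_one (fun _ _ => zero_le) (fun i' _ => BBZO.P_le_one P hP _ _)
      · intro _ c
        have hov : ∃ k, k ≤ l ∧ n < BBZO.cntSeq pa ρ c k := by
          refine ⟨l, le_rfl, ?_⟩
          have hcg := BBZO.cnt_ge pa ρ c n (1 + kt) (by omega) hwin
          rw [hl]
          omega
        have hcl := BBZO.CL P hP pa n l D ρ c hld hov
        rwa [hρ0] at hcl
    choose εf hεf1 hεf2 hεf3 using hblock
    set ε := ∏ t : S, εf t with hε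
    have hε0 : 0 < ε := by
      rw [hε, CanonicallyOrderedAdd.prod_pos]
      exact fun t _ => hεf1 t
    have hεle : ∀ t : S, ε ≤ εf t := by
      intro t
      calc ε = εf t * ∏ x ∈ Finset.univ.erase t, εf x := by
            rw [hε, Finset.mul_prod_erase _ _ (Finset.mem_univ t)]
        _ ≤ εf t * 1 :=
            mul_le_mul_right (Finset.prod_le_one (fun _ _ => zero_le) (fun x _ => hεf2 x)) _
        _ = εf t := mul_one _
    have hBB : ∀ t ∈ B, ∀ c, BBZO.WS P pa n D t c (fun _ _ => 1) ≤ 1 - ε := by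
      intro t ht c
      have h2 : BBZO.WS P pa n D t c (fun _ _ => 1) + ε ≤ 1 :=
        le_trans (add_le_add le_rfl (hεle t)) (hεf3 t ht c)
      have hεtop : ε ≠ ∞ := ne_top_of_le_ne_top ENNReal.one_ne_top (le_trans (hεle t) (hεf2 t))
      exact ENNReal.le_sub_of_add_le_right hεtop h2
    have hgeom : ∀ K : ℕ, ∀ t ∈ B, ∀ c, BBZO.WS P pa n (K * D) t c (fun _ _ => 1) ≤ (1 - ε)^K := by
      intro K
      induction K with
      | zero =>
        intro t ht c
        rw [Nat.zero_mul, pow_zero, BBZO.WS]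
        split
        · exact le_rfl
        · exact zero_le
      | succ K ihK =>
        intro t ht c
        rw [show (K+1) * D = D + K * D by ring, BBZO.WS_comp]
        calc BBZO.WS P pa n D t c (fun t' c' => BBZO.WS P pa n (K * D) t' c' (fun _ _ => 1))
            ≤ BBZO.WS P pa n D t c (fun _ _ => (1 - ε)^K) :=
              BBZO.WS_mono_B P pa n B hBclosed D t c _ _ ht (fun t' ht' c' => ihK t' ht' c')
          _ = (1 - ε)^K * BBZO.WS P pa n D t c (fun _ _ => 1) := BBZO.WS_const P pa n _ D t c
          _ ≤ (1 - ε)^K * (1 - ε) := mul_le_mul_right (hBB t ht c) _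
          _ = (1 - ε)^(K+1) := (pow_succ _ _).symm
    set c₀ : ℕ := if pa s then 0 else 1 with hc₀
    have hμE : ∀ K : ℕ, μ E ≤ (1 - ε)^K := by
      intro K
      set m := K * D with hm
      have hEQ : E ⊆ {π : ℕ → S | ∀ i, i + n ≤ m → ∃ j, i ≤ j ∧ j ≤ i + n ∧ a ∈ L (π j)} :=
        fun π hπ i _ => hπ i
      have hcov := BBZO.cover_le μ m
        (fun π => ∀ i, i + n ≤ m → ∃ j, i ≤ j ∧ j ≤ i + n ∧ a ∈ L (π j))
        (fun π π' hag hQ i hi => by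
          obtain ⟨j, hj1, hj2, hj3⟩ := hQ i hi
          exact ⟨j, hj1, hj2, by rwa [← hag j (by omega)]⟩)
        (fun u' => (if u' 0 = s then 1 else 0) * ∏ k ∈ Finset.range m, P (u' k) (u' (k+1)))
        (fun u' => hcyl m u')
      have hterm : ∀ (t : S) (w : Fin m → S),
          (if (∀ i, i + n ≤ m → ∃ j, i ≤ j ∧ j ≤ i + n ∧ a ∈ L (BBZO.ext m (Fin.cons t w) j))
            then (if (BBZO.ext m (Fin.cons t w)) 0 = s then 1 else 0) *
              ∏ k ∈ Finset.range m, P (BBZO.ext m (Fin.cons t w) k) (BBZO.ext m (Fin.cons t w) (k+1))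
            else 0)
          ≤ (if t = s then (if BBZO.cntok pa n m c₀ w then BBZO.prodP P m s w else 0) else 0) := by
        intro t w
        set g : ℕ → S := BBZO.ext m (Fin.cons t w) with hgdef
        have hg0 : g 0 = t := BBZO.ext_cons_zero m t w
        by_cases hQ : ∀ i, i + n ≤ m → ∃ j, i ≤ j ∧ j ≤ i + n ∧ a ∈ L (g j)
        swap
        · rw [if_neg hQ]; exact zero_le
        rw [if_pos hQ]
        by_cases hts : t = s
        swap
        · rw [hg0, if_neg hts, zero_mul, if_neg hts]
        subst hts
        rw [hg0, if_pos rfl, one_mul, if_pos rfl]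
        have hgw : (fun i : Fin m => g ((i : ℕ) + 1)) = w := by
          funext i
          exact BBZO.ext_cons_succ m t w i
        have hcnt : ∀ k ≤ m, BBZO.cntSeq pa g c₀ k ≤ n := by
          refine BBZO.cnt_le_window pa g m n c₀ ?_ ?_ (fun i hi => hQ i hi)
          · rw [hc₀]; split <;> omega
          · intro h1
            rw [hg0]
            rw [hc₀] at h1
            by_cases hpas : pa t
            · rw [if_pos hpas] at h1; omega
            · exact hpas
        have hok : BBZO.cntok pa n m c₀ w := by
          rw [← hgw]
          exact BBZO.cntok_of_cnt pa n m g c₀ hcnt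
        rw [if_pos hok]
        refine le_of_eq ?_
        calc ∏ k ∈ Finset.range m, P (g k) (g (k+1))
            = BBZO.prodP P m (g 0) (fun i : Fin m => g ((i : ℕ)+1)) := BBZO.prod_eq_prodP P m g
          _ = BBZO.prodP P m t w := by rw [hg0, hgw]
      have hsum1 : (∑ v : Fin (m+1) → S,
          if (∀ i, i + n ≤ m → ∃ j, i ≤ j ∧ j ≤ i + n ∧ a ∈ L (BBZO.ext m v j))
          then (if (BBZO.ext m v) 0 = s then 1 else 0) *
            ∏ k ∈ Finset.range m, P (BBZO.ext m v k) (BBZO.ext m v (k+1)) else 0)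
          ≤ ∑ w : Fin m → S, (if BBZO.cntok pa n m c₀ w then BBZO.prodP P m s w else 0) := by
        rw [BBZO.sum_cons_split m]
        calc ∑ t : S, ∑ w : Fin m → S,
              (if (∀ i, i + n ≤ m → ∃ j, i ≤ j ∧ j ≤ i + n ∧ a ∈ L (BBZO.ext m (Fin.cons t w) j))
              then (if (BBZO.ext m (Fin.cons t w)) 0 = s then 1 else 0) *
                ∏ k ∈ Finset.range m, P (BBZO.ext m (Fin.cons t w) k) (BBZO.ext m (Fin.cons t w) (k+1))
              else 0)
            ≤ ∑ t : S, ∑ w : Fin m → S,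
              (if t = s then (if BBZO.cntok pa n m c₀ w then BBZO.prodP P m s w else 0) else 0) :=
              Finset.sum_le_sum fun t _ => Finset.sum_le_sum fun w _ => hterm t w
          _ = ∑ w : Fin m → S, ∑ t : S,
              (if t = s then (if BBZO.cntok pa n m c₀ w then BBZO.prodP P m s w else 0) else 0) :=
              Finset.sum_comm
          _ = ∑ w : Fin m → S, (if BBZO.cntok pa n m c₀ w then BBZO.prodP P m s w else 0) := by
              refine Finset.sum_congr rfl fun w _ => ?_
              rw [Finset.sum_ite_eq' Finset.univ s
                (fun _ => if BBZO.cntok pa n m c₀ w then BBZO.prodP P m s w else 0)]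
              simp
      exact le_trans (measure_mono hEQ) (le_trans hcov (le_trans hsum1
        (le_trans (BBZO.sum_le_WS P pa n m s c₀) (hgeom K s hs c₀))))
    have hlim : Filter.Tendsto (fun K : ℕ => (1 - ε)^K) Filter.atTop (nhds 0) :=
      ENNReal.tendsto_pow_atTop_nhds_zero_of_lt_one
        (ENNReal.sub_lt_self ENNReal.one_ne_top one_ne_zero hε0.ne')
    exact le_antisymm (ge_of_tendsto' hlim hμE) (zero_le)
  -- ===== glue =====
  refine ⟨⟨fun h1 => ?_, hone⟩, ⟨fun h0 => ?_, hzero⟩⟩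
  · by_contra hlt
    rw [not_lt] at hlt
    rw [hzero hlt] at h1
    exact one_ne_zero h1.symm
  · by_contra hle
    rw [not_le] at hle
    rw [hone hle] at h0
    exact one_ne_zero h0
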